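/- Let n≥1, α>0, N,M ∈ ℕ, masses m_X^1,…,m_X^N>0 and m_Y^1,…,m_Y^M>0, and let S_ρ, S_η, K : ℝⁿ→ℝ be C¹ and even (so their gradients are odd). Suppose (X_1,…,X_N,Y_1,…,Y_M):[0,T]→(ℝⁿ)^{N+M} is differentiable and solves the predator–prey particle system Ẋ_i = −Σ_{k=1}^N m_X^k ∇S_ρ(X_i−X_k) − Σ_{k=1}^M m_Y^k ∇K(X_i−Y_k), Ẏ_j = −Σ_{k=1}^M m_Y^k ∇S_η(Y_j−Y_k) + α Σ_{k=1}^N m_X^k ∇K(Y_j−X_k) for i=1,…,N, j=1,…,M. Then the joint centre of mass C_α(t) = α Σ_{i=1}^N m_X^i X_i(t) − Σ_{j=1}^M m_Y^j Y_j(t) is constant on [0,T]. -/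

import Mathlib

open scoped BigOperators

lemma grad_odd {E : Type*} [NormedAddCommGroup E] [InnerProductSpace ℝ E] [CompleteSpace E]
    (G : E → ℝ) (hG : ContDiff ℝ 1 G) (he : ∀ x, G (-x) = G x) (x : E) :
    gradient G (-x) = - gradient G x := by
  have hd : ∀ y, DifferentiableAt ℝ G y := fun y => hG.differentiable one_ne_zero y
  have h1 : HasFDerivAt (fun y => G (-y))
      ((fderiv ℝ G (-x)).comp (-(ContinuousLinearMap.id ℝ E))) x := by
    have := (hd (-x)).hasFDerivAt.comp x ((hasFDerivAt_id x).neg)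
    exact this
  rw [show (fun y => G (-y)) = G from funext he] at h1
  have h2 : fderiv ℝ G x = (fderiv ℝ G (-x)).comp (-(ContinuousLinearMap.id ℝ E)) := h1.fderiv
  have h3 : (fderiv ℝ G (-x)).comp (-(ContinuousLinearMap.id ℝ E)) = -(fderiv ℝ G (-x)) := by
    ext v; simp
  simp only [gradient]
  rw [h2, h3, map_neg, neg_neg]

lemma sum_antisym {ι : Type*} [Fintype ι] {E : Type*} [AddCommGroup E] [Module ℝ E]
    (f : ι → ι → E) (h : ∀ i k, f i k = - f k i) : ∑ i, ∑ k, f i k = 0 := by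
  have h1 : ∑ i, ∑ k, f i k = -∑ i, ∑ k, f i k := by
    calc ∑ i, ∑ k, f i k = ∑ k, ∑ i, f i k := Finset.sum_comm
      _ = ∑ k, ∑ i, -(f k i) := Finset.sum_congr rfl fun k _ => Finset.sum_congr rfl fun i _ => h i k
      _ = -∑ k, ∑ i, f k i := by simp
      _ = -∑ i, ∑ k, f i k := rfl
  have h2 : (2 : ℝ) • (∑ i, ∑ k, f i k) = 0 := by
    rw [two_smul]; nth_rewrite 1 [h1]; abel
  have := smul_eq_zero.mp h2
  simpa using this

theorem stmt_10 (n : ℕ) (hn : 1 ≤ n) (α : ℝ) (hα : 0 < α) (N M : ℕ)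
    (mX : Fin N → ℝ) (mY : Fin M → ℝ) (hmX : ∀ i, 0 < mX i) (hmY : ∀ j, 0 < mY j)
    (Sρ Sη K : EuclideanSpace ℝ (Fin n) → ℝ)
    (hSρ : ContDiff ℝ 1 Sρ) (hSη : ContDiff ℝ 1 Sη) (hK : ContDiff ℝ 1 K)
    (hSρe : ∀ x, Sρ (-x) = Sρ x) (hSηe : ∀ x, Sη (-x) = Sη x) (hKe : ∀ x, K (-x) = K x)
    (T : ℝ)
    (X : Fin N → ℝ → EuclideanSpace ℝ (Fin n)) (Y : Fin M → ℝ → EuclideanSpace ℝ (Fin n))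
    (hX : ∀ i, ∀ t ∈ Set.Icc (0 : ℝ) T, HasDerivAt (X i)
      (-(∑ k, mX k • gradient Sρ (X i t - X k t)) - ∑ k, mY k • gradient K (X i t - Y k t)) t)
    (hY : ∀ j, ∀ t ∈ Set.Icc (0 : ℝ) T, HasDerivAt (Y j)
      (-(∑ k, mY k • gradient Sη (Y j t - Y k t)) + α • ∑ k, mX k • gradient K (Y j t - X k t)) t) :
    ∀ t ∈ Set.Icc (0 : ℝ) T,
      (α • ∑ i, mX i • X i t) - ∑ j, mY j • Y j t
        = (α • ∑ i, mX i • X i 0) - ∑ j, mY j • Y j 0 := by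
  set f : ℝ → EuclideanSpace ℝ (Fin n) :=
    fun t => (α • ∑ i, mX i • X i t) - ∑ j, mY j • Y j t with hf
  have key : ∀ t ∈ Set.Icc (0 : ℝ) T, HasDerivAt f 0 t := by
    intro t ht
    have hD : HasDerivAt f
        ((α • ∑ i, mX i • (-(∑ k, mX k • gradient Sρ (X i t - X k t))
            - ∑ k, mY k • gradient K (X i t - Y k t)))
          - ∑ j, mY j • (-(∑ k, mY k • gradient Sη (Y j t - Y k t))
            + α • ∑ k, mX k • gradient K (Y j t - X k t))) t := by
      apply HasDerivAt.sub
      · exact (HasDerivAt.fun_sum (fun i _ => (hX i t ht).const_smul (mX i))).const_smul α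
      · exact HasDerivAt.fun_sum (fun j _ => (hY j t ht).const_smul (mY j))
    convert hD using 1
    have hA : ∑ i, mX i • ∑ k, mX k • gradient Sρ (X i t - X k t) = 0 := by
      simp_rw [Finset.smul_sum, smul_smul]
      apply sum_antisym
      intro i k
      rw [show X i t - X k t = -(X k t - X i t) by abel, grad_odd Sρ hSρ hSρe,
        smul_neg, mul_comm]
    have hB : ∑ j, mY j • ∑ k, mY k • gradient Sη (Y j t - Y k t) = 0 := by
      simp_rw [Finset.smul_sum, smul_smul]
      apply sum_antisym
      intro i k
      rw [show Y i t - Y k t = -(Y k t - Y i t) by abel, grad_odd Sη hSη hSηe,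
        smul_neg, mul_comm]
    have hC : ∑ j, mY j • ∑ k, mX k • gradient K (Y j t - X k t)
        = - ∑ i, mX i • ∑ k, mY k • gradient K (X i t - Y k t) := by
      simp_rw [Finset.smul_sum, smul_smul]
      rw [Finset.sum_comm, ← Finset.sum_neg_distrib]
      apply Finset.sum_congr rfl
      intro k _
      rw [← Finset.sum_neg_distrib]
      apply Finset.sum_congr rfl
      intro j _
      rw [show Y j t - X k t = -(X k t - Y j t) by abel, grad_odd K hK hKe,
        smul_neg, mul_comm]
    have hE : ∑ j, mY j • α • ∑ k, mX k • gradient K (Y j t - X k t)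
        = α • ∑ j, mY j • ∑ k, mX k • gradient K (Y j t - X k t) := by
      rw [Finset.smul_sum]; exact Finset.sum_congr rfl fun j _ => smul_comm _ _ _
    simp only [smul_sub, smul_neg, smul_add, Finset.sum_sub_distrib, Finset.sum_add_distrib,
      Finset.sum_neg_distrib]
    rw [hA, hB, hE, hC]
    module
  intro t ht
  have hcont : ContinuousOn f (Set.Icc 0 T) := fun s hs => (key s hs).continuousAt.continuousWithinAt
  have := constant_of_has_deriv_right_zero hcont
    (fun s hs => ((key s (Set.mem_Icc_of_Ico hs)).hasDerivWithinAt))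
  exact this t ht
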